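/- Define $f : (\mathbb{R}^3 \setminus \{0\})^2 \to$ subspaces of $\mathbb{R}^3$ by $f(u,v) = u^\perp \cap v^\perp$ if $\langle u,v \rangle = 0$, and $f(u,v) = u^\perp$ otherwise. Let $x, y, a, b \in (S^2)^n$ with $\{x,y\} \neq \{a,b\}$ and $x \neq y$, $a \neq b$, such that every three distinct elements among $\{x,y,a,b\}$ are vector trifferent. Then the subspaces $E_{x,y} = \bigotimes_{i=1}^n f(x_i, y_i)$ and $E_{a,b} = \bigotimes_{i=1}^n f(a_i, b_i)$ of $(\mathbb{R}^3)^{\otimes n}$ are orthogonal. -/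

import Mathlib

open scoped RealInnerProductSpace

/-- The subspace of `ℝ³` associated to a pair of nonzero vectors: `u^⊥ ∩ v^⊥` if `u ⊥ v`,
and `u^⊥` otherwise. -/
noncomputable def pairSubspace (u v : EuclideanSpace ℝ (Fin 3)) :
    Submodule ℝ (EuclideanSpace ℝ (Fin 3)) :=
  if ⟪u, v⟫ = 0 then (ℝ ∙ u)ᗮ ⊓ (ℝ ∙ v)ᗮ else (ℝ ∙ u)ᗮ

/-- The subspace `E_{x,y} = ⨂ᵢ f(xᵢ, yᵢ)` of `(ℝ³)^{⊗ n}`, where the tensor power is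
realized concretely as `EuclideanSpace ℝ (Fin n → Fin 3)` and elementary tensors are
`j ↦ ∏ i, vᵢ (j i)`. -/
noncomputable def pairTensorSubspace (n : ℕ) (x y : Fin n → EuclideanSpace ℝ (Fin 3)) :
    Submodule ℝ (EuclideanSpace ℝ (Fin n → Fin 3)) :=
  Submodule.span ℝ {w : EuclideanSpace ℝ (Fin n → Fin 3) |
    ∃ v : Fin n → EuclideanSpace ℝ (Fin 3),
      (∀ i, v i ∈ pairSubspace (x i) (y i)) ∧ w = WithLp.toLp 2 (fun j => ∏ i, v i (j i))}

/-- In `ℝ³`, if `e₁, e₂, e₃` are pairwise orthogonal unit vectors, `v ⊥ e₁`, `v ⊥ e₂` and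
`w ⊥ e₃`, then `v ⊥ w`. -/
theorem key3 (e₁ e₂ e₃ v w : EuclideanSpace ℝ (Fin 3))
    (h1 : ‖e₁‖ = 1) (h2 : ‖e₂‖ = 1) (h3 : ‖e₃‖ = 1)
    (h12 : ⟪e₁, e₂⟫ = 0) (h13 : ⟪e₁, e₃⟫ = 0) (h23 : ⟪e₂, e₃⟫ = 0)
    (hv1 : ⟪e₁, v⟫ = 0) (hv2 : ⟪e₂, v⟫ = 0) (hw : ⟪e₃, w⟫ = 0) :
    ⟪v, w⟫ = 0 := by
  have n1 : ⟪e₁, e₁⟫ = 1 := by rw [real_inner_self_eq_norm_sq, h1]; norm_num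
  have n2 : ⟪e₂, e₂⟫ = 1 := by rw [real_inner_self_eq_norm_sq, h2]; norm_num
  have n3 : ⟪e₃, e₃⟫ = 1 := by rw [real_inner_self_eq_norm_sq, h3]; norm_num
  set B : Fin 3 → EuclideanSpace ℝ (Fin 3) := ![e₁, e₂, e₃] with hB
  have horth : Orthonormal ℝ B := by
    rw [orthonormal_iff_ite]
    intro i j
    fin_cases i <;> fin_cases j <;>
      simp_all [B, real_inner_comm e₁ e₂, real_inner_comm e₁ e₃, real_inner_comm e₂ e₃]
  have hspan : Submodule.span ℝ (Set.range B) = ⊤ := by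
    have hli := horth.linearIndependent
    apply LinearIndependent.span_eq_top_of_card_eq_finrank hli
    simp [finrank_euclideanSpace]
  set v' : EuclideanSpace ℝ (Fin 3) := v - ⟪e₃, v⟫ • e₃ with hv'
  have hzero : ∀ u ∈ Submodule.span ℝ (Set.range B), ⟪u, v'⟫ = 0 := by
    intro u hu
    induction hu using Submodule.span_induction with
    | mem u hu =>
      obtain ⟨i, rfl⟩ := hu
      fin_cases i <;>
        simp [B, v', inner_sub_right, inner_smul_right, hv1, hv2, h13, h23, n3, h3,
          real_inner_comm e₂ e₃]
    | zero => simp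
    | add u₁ u₂ _ _ h₁ h₂ => rw [inner_add_left, h₁, h₂]; ring
    | smul c u _ h => rw [real_inner_smul_left, h]; ring
  have hv'0 : v' = 0 := by
    have := hzero v' (hspan ▸ Submodule.mem_top)
    exact inner_self_eq_zero.mp this
  have hveq : v = ⟪e₃, v⟫ • e₃ := by
    have : v - ⟪e₃, v⟫ • e₃ = 0 := hv'0
    linear_combination (norm := module) this
  rw [hveq, real_inner_smul_left, hw]; ring

/-- There is an index `i` and a unit vector `c` orthogonal to `x i` and `y i`, with
`x i ⊥ y i`, such that `c` is orthogonal to all of `pairSubspace (a i) (b i)`. -/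
theorem good_index (n : ℕ) (x y a b : Fin n → EuclideanSpace ℝ (Fin 3))
    (ha : ∀ i, ‖a i‖ = 1) (hb : ∀ i, ‖b i‖ = 1)
    (hxy : x ≠ y) (hab : a ≠ b)
    (hpairs : ¬((a = x ∧ b = y) ∨ (a = y ∧ b = x)))
    (htriff : ∀ p q r : Fin n → EuclideanSpace ℝ (Fin 3),
      p ∈ ({x, y, a, b} : Set (Fin n → EuclideanSpace ℝ (Fin 3))) →
      q ∈ ({x, y, a, b} : Set (Fin n → EuclideanSpace ℝ (Fin 3))) →
      r ∈ ({x, y, a, b} : Set (Fin n → EuclideanSpace ℝ (Fin 3))) →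
      p ≠ q → p ≠ r → q ≠ r →
      ∃ i, ⟪p i, q i⟫ = 0 ∧ ⟪p i, r i⟫ = 0 ∧ ⟪q i, r i⟫ = 0) :
    ∃ i, ⟪x i, y i⟫ = 0 ∧ ∃ c : EuclideanSpace ℝ (Fin 3), ‖c‖ = 1 ∧
      ⟪x i, c⟫ = 0 ∧ ⟪y i, c⟫ = 0 ∧
      ∀ w ∈ pairSubspace (a i) (b i), ⟪c, w⟫ = 0 := by
  by_cases hA : a ≠ x ∧ a ≠ y
  · obtain ⟨i, h1, h2, h3⟩ := htriff x y a (by simp) (by simp) (by simp) hxy hA.1.symm hA.2.symm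
    refine ⟨i, h1, a i, ha i, h2, h3, fun w hw => ?_⟩
    rw [real_inner_comm]
    rw [pairSubspace] at hw
    split_ifs at hw with h
    · exact Submodule.mem_orthogonal_singleton_iff_inner_left.mp hw.1
    · exact Submodule.mem_orthogonal_singleton_iff_inner_left.mp hw
  · push_neg at hA
    rcases eq_or_ne a x with rfl | hax
    · have hbx : b ≠ a := hab.symm
      have hby : b ≠ y := fun h => hpairs (Or.inl ⟨rfl, h⟩)
      obtain ⟨i, h1, h2, h3⟩ := htriff a y b (by simp) (by simp) (by simp) hxy hbx.symm hby.symm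
      refine ⟨i, h1, b i, hb i, h2, h3, fun w hw => ?_⟩
      rw [real_inner_comm]
      rw [pairSubspace, if_pos h2] at hw
      exact Submodule.mem_orthogonal_singleton_iff_inner_left.mp hw.2
    · have hay : a = y := hA hax
      subst hay
      have hbx : b ≠ x := fun h => hpairs (Or.inr ⟨rfl, h⟩)
      have hba : b ≠ a := hab.symm
      obtain ⟨i, h1, h2, h3⟩ := htriff x a b (by simp) (by simp) (by simp) hxy hbx.symm hba.symm
      refine ⟨i, h1, b i, hb i, h2, h3, fun w hw => ?_⟩
      rw [real_inner_comm]
      rw [pairSubspace, if_pos h3] at hw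
      exact Submodule.mem_orthogonal_singleton_iff_inner_left.mp hw.2

/-- The inner product of elementary tensors factorizes as a product of inner products. -/
theorem tensor_inner (n : ℕ) (v w : Fin n → EuclideanSpace ℝ (Fin 3))
    (u₀ w₀ : EuclideanSpace ℝ (Fin n → Fin 3))
    (hu : u₀ = WithLp.toLp 2 (fun j => ∏ i, v i (j i))) (hw : w₀ = WithLp.toLp 2 (fun j => ∏ i, w i (j i))) :
    ⟪u₀, w₀⟫ = ∏ i, ⟪v i, w i⟫ := by
  simp only [PiLp.inner_apply, RCLike.inner_apply, conj_trivial]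
  have : ∀ j : Fin n → Fin 3, u₀ j * w₀ j = ∏ i, v i (j i) * w i (j i) := by
    intro j
    rw [hu, hw]; simp only [PiLp.toLp_apply]; rw [Finset.prod_mul_distrib]
  simp only [mul_comm (w₀.ofLp _), mul_comm ((w _).ofLp _)]
  rw [Finset.sum_congr rfl fun j _ => this j, ← Fintype.prod_sum fun i k => v i k * w i k]

theorem pair_subspaces_orthogonal (n : ℕ) (x y a b : Fin n → EuclideanSpace ℝ (Fin 3))
    (hx : ∀ i, ‖x i‖ = 1) (hy : ∀ i, ‖y i‖ = 1) (ha : ∀ i, ‖a i‖ = 1) (hb : ∀ i, ‖b i‖ = 1)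
    (hxy : x ≠ y) (hab : a ≠ b)
    (hpairs : ¬((a = x ∧ b = y) ∨ (a = y ∧ b = x)))
    (htriff : ∀ p q r : Fin n → EuclideanSpace ℝ (Fin 3),
      p ∈ ({x, y, a, b} : Set (Fin n → EuclideanSpace ℝ (Fin 3))) →
      q ∈ ({x, y, a, b} : Set (Fin n → EuclideanSpace ℝ (Fin 3))) →
      r ∈ ({x, y, a, b} : Set (Fin n → EuclideanSpace ℝ (Fin 3))) →
      p ≠ q → p ≠ r → q ≠ r →
      ∃ i, ⟪p i, q i⟫ = 0 ∧ ⟪p i, r i⟫ = 0 ∧ ⟪q i, r i⟫ = 0) :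
    ∀ u ∈ pairTensorSubspace n x y, ∀ w ∈ pairTensorSubspace n a b, ⟪u, w⟫ = 0 := by
  obtain ⟨i₀, hxy0, c, hc1, hxc, hyc, hcw⟩ :=
    good_index n x y a b ha hb hxy hab hpairs htriff
  -- generators are orthogonal
  have hgen : ∀ v vw : Fin n → EuclideanSpace ℝ (Fin 3),
      (∀ i, v i ∈ pairSubspace (x i) (y i)) →
      (∀ i, vw i ∈ pairSubspace (a i) (b i)) →
      ∀ u₀ w₀ : EuclideanSpace ℝ (Fin n → Fin 3),
      u₀ = WithLp.toLp 2 (fun j => ∏ i, v i (j i)) → w₀ = WithLp.toLp 2 (fun j => ∏ i, vw i (j i)) →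
      ⟪u₀, w₀⟫ = 0 := by
    intro v vw hv hvw u₀ w₀ hu₀ hw₀
    rw [tensor_inner n v vw u₀ w₀ hu₀ hw₀]
    apply Finset.prod_eq_zero (Finset.mem_univ i₀)
    have hvmem := hv i₀
    rw [pairSubspace, if_pos hxy0] at hvmem
    have hvx : ⟪x i₀, v i₀⟫ = 0 :=
      Submodule.mem_orthogonal_singleton_iff_inner_right.mp hvmem.1
    have hvy : ⟪y i₀, v i₀⟫ = 0 :=
      Submodule.mem_orthogonal_singleton_iff_inner_right.mp hvmem.2
    exact key3 (x i₀) (y i₀) c (v i₀) (vw i₀) (hx i₀) (hy i₀) hc1 hxy0 hxc hyc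
      hvx hvy (hcw (vw i₀) (hvw i₀))
  intro u hu w hw
  induction hu using Submodule.span_induction with
  | mem u hu =>
    induction hw using Submodule.span_induction with
    | mem w hw =>
      obtain ⟨v, hv, hveq⟩ := hu
      obtain ⟨vw, hvw, hvweq⟩ := hw
      exact hgen v vw hv hvw u w hveq hvweq
    | zero => simp
    | add w₁ w₂ _ _ h₁ h₂ => rw [inner_add_right, h₁, h₂]; ring
    | smul r w _ h => rw [real_inner_smul_right, h]; ring
  | zero => simp
  | add u₁ u₂ _ _ h₁ h₂ => rw [inner_add_left, h₁, h₂]; ring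
  | smul r u _ h => rw [real_inner_smul_left, h]; ring
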